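/- Let F be a finite field with q elements, q ≡ 3 (mod 4), and let AGM denote the map sending an admissible pair (a, b) to the admissible pair ((a+b)/2, b′), where b′ is the unique element with b′² = ab and (a+b)b′/2 a nonzero square. Then for every admissible pair v, the pair AGM(v) is a periodic point of AGM: there exists n ≥ 1 with AGM^n(AGM(v)) = AGM(v). (Equivalently, every connected component of the functional graph of AGM consists of a cycle together with tentacles of length exactly one.) -/

import Mathlib

/-- A pair `(a, b)` of elements of a field is admissible if `a ≠ 0`, `b ≠ 0`, `a ≠ b`,
`a ≠ -b`, and `a*b` is a square. -/
def IsAdmissible {F : Type*} [Field F] (a b : F) : Prop :=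
  a ≠ 0 ∧ b ≠ 0 ∧ a ≠ b ∧ a ≠ -b ∧ IsSquare (a * b)

/-- The type of admissible pairs in `F`. -/
def AdmPair (F : Type*) [Field F] : Type _ := {v : F × F // IsAdmissible v.1 v.2}

/-- `agm` is the AGM map on admissible pairs: it sends `(a, b)` to `((a + b)/2, b')` where `b'`
is the unique element with `b'^2 = a*b` and `((a + b)/2) * b'` a nonzero square. -/
def IsAGMMap {F : Type*} [Field F] (agm : AdmPair F → AdmPair F) : Prop :=
  ∀ v : AdmPair F,
    (agm v).1.1 = (v.1.1 + v.1.2) / 2 ∧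
    (agm v).1.2 ^ 2 = v.1.1 * v.1.2 ∧
    (agm v).1.1 * (agm v).1.2 ≠ 0 ∧
    IsSquare ((agm v).1.1 * (agm v).1.2)

section Aux

variable {F : Type*} [Field F]

lemma AdmPair.adm (w : AdmPair F) : IsAdmissible w.1.1 w.1.2 := w.2

/-- Any image of the AGM map has `a² - b²` a square. -/
lemma agm_sq_sub_sq (h2 : (2 : F) ≠ 0) {agm : AdmPair F → AdmPair F}
    (hagm : IsAGMMap agm) (v : AdmPair F) :
    IsSquare ((agm v).1.1 ^ 2 - (agm v).1.2 ^ 2) := by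
  obtain ⟨h1, hsq, -, -⟩ := hagm v
  refine ⟨(v.1.1 - v.1.2) / 2, ?_⟩
  rw [h1, hsq]
  field_simp
  ring

/-- The AGM map is injective on the range of the AGM map. -/
lemma agm_inj_on_range (h2 : (2 : F) ≠ 0) (hns : ¬ IsSquare (-1 : F))
    {agm : AdmPair F → AdmPair F} (hagm : IsAGMMap agm) (u₁ u₂ : AdmPair F)
    (h : agm (agm u₁) = agm (agm u₂)) : agm u₁ = agm u₂ := by
  set w₁ := agm u₁ with hw₁
  set w₂ := agm u₂ with hw₂
  obtain ⟨e1, e2, -, -⟩ := hagm w₁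
  obtain ⟨f1, f2, -, -⟩ := hagm w₂
  rw [h] at e1 e2
  rw [f1] at e1
  rw [f2] at e2
  -- e1 : (w₁.1.1 + w₁.1.2)/2 = (w₂.1.1 + w₂.1.2)/2, e2 : products equal
  have hsum : w₁.1.1 + w₁.1.2 = w₂.1.1 + w₂.1.2 := by
    field_simp at e1
    linear_combination -e1
  have hprod : w₁.1.1 * w₁.1.2 = w₂.1.1 * w₂.1.2 := e2.symm
  have hcases : (w₁.1.1 - w₂.1.1) * (w₁.1.1 - w₂.1.2) = 0 := by
    linear_combination w₁.1.1 * hsum - hprod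
  rcases mul_eq_zero.mp hcases with hc | hc
  · have ha : w₁.1.1 = w₂.1.1 := sub_eq_zero.mp hc
    have hb : w₁.1.2 = w₂.1.2 := by
      linear_combination hsum - ha
    apply Subtype.ext
    exact Prod.ext ha hb
  · -- swapped case: contradiction via squares
    exfalso
    have hab : w₁.1.1 = w₂.1.2 := sub_eq_zero.mp hc
    have hba : w₁.1.2 = w₂.1.1 := by linear_combination hsum - hab
    have hs1 : IsSquare (w₁.1.1 ^ 2 - w₁.1.2 ^ 2) := agm_sq_sub_sq h2 hagm u₁
    have hs2 : IsSquare (w₂.1.1 ^ 2 - w₂.1.2 ^ 2) := agm_sq_sub_sq h2 hagm u₂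
    rw [← hab, ← hba] at hs2
    have hne : w₁.1.1 ^ 2 - w₁.1.2 ^ 2 ≠ 0 := by
      obtain ⟨-, -, hne1, hne2, -⟩ := w₁.adm
      intro hzero
      have : (w₁.1.1 - w₁.1.2) * (w₁.1.1 + w₁.1.2) = 0 := by
        linear_combination hzero
      rcases mul_eq_zero.mp this with h' | h'
      · exact hne1 (sub_eq_zero.mp h')
      · exact hne2 (eq_neg_of_add_eq_zero_left h')
    apply hns
    have : (-1 : F) = (w₁.1.2 ^ 2 - w₁.1.1 ^ 2) * (w₁.1.1 ^ 2 - w₁.1.2 ^ 2)⁻¹ := by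
      field_simp
      ring
    rw [this]
    exact hs2.mul (isSquare_inv.mpr hs1)

end Aux

/-- For a finite field with `q ≡ 3 (mod 4)` elements, the image of every admissible pair under
the AGM map is a periodic point of the AGM map: every connected component of the functional
graph consists of a cycle with tentacles of length exactly one. -/
theorem agm_image_is_periodic
    (F : Type*) [Field F] [Fintype F] (hq : Fintype.card F % 4 = 3)
    (agm : AdmPair F → AdmPair F) (hagm : IsAGMMap agm) :
    ∀ v : AdmPair F, ∃ n : ℕ, 1 ≤ n ∧ agm^[n] (agm v) = agm v := by
  have h2 : (2 : F) ≠ 0 := by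
    intro h
    have hdvd : ringChar F ∣ 2 := ringChar.dvd (by exact_mod_cast h)
    have hchar : ringChar F = 2 :=
      ((Nat.dvd_prime Nat.prime_two).mp hdvd).resolve_left CharP.ringChar_ne_one
    have := FiniteField.even_card_of_char_two hchar
    omega
  have hns : ¬ IsSquare (-1 : F) := by
    rw [FiniteField.isSquare_neg_one_iff]
    omega
  haveI : Finite (AdmPair F) := by unfold AdmPair; infer_instance
  intro v
  -- iterates of agm v are not injective as a function of n
  obtain ⟨i, j, hij, heq⟩ := Finite.exists_ne_map_eq_of_infinite
    (fun n : ℕ => agm^[n] (agm v))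
  -- WLOG i < j
  wlog hlt : i < j generalizing i j
  · exact this j i (Ne.symm hij) heq.symm (by omega)
  -- cancellation by induction on i
  have key : ∀ i j : ℕ, agm^[i] (agm v) = agm^[i + j] (agm v) →
      agm v = agm^[j] (agm v) := by
    intro i
    induction i with
    | zero => intro j h; simpa using h
    | succ i ih =>
      intro j h
      apply ih
      have hform : ∀ k : ℕ, agm^[k + 1] (agm v) = agm (agm (agm^[k] v)) := by
        intro k
        rw [← Function.iterate_succ_apply, Function.iterate_succ_apply',
          Function.iterate_succ_apply']
      have h' : agm (agm (agm^[i] v)) = agm (agm (agm^[i + j] v)) := by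
        rw [← hform, ← hform]
        have : i + 1 + j = i + j + 1 := by omega
        rw [this] at h
        exact h
      have := agm_inj_on_range h2 hns hagm _ _ h'
      rw [← Function.iterate_succ_apply, ← Function.iterate_succ_apply,
        Function.iterate_succ_apply', Function.iterate_succ_apply']
      exact this
  refine ⟨j - i, by omega, ?_⟩
  have := key i (j - i) (by rw [heq]; congr 1; omega)
  exact this.symm
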